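/- For vectors $\eta, \zeta \in \mathbb{R}^3 \setminus \{0\}$ and $\xi = \eta + \zeta$, the cross-product null form symbol satisfies the elliptic bound $\left|\frac{\eta \times \zeta}{|\eta||\zeta|}\right| \lesssim \frac{|\xi|^{1/2} (|\eta| + |\zeta| - |\xi|)^{1/2}}{|\eta|^{1/2} |\zeta|^{1/2}}$, with an absolute implicit constant. -/

import Mathlib

noncomputable section

abbrev E3 := EuclideanSpace ℝ (Fin 3)

/-- The cross product in `ℝ³` (with the Euclidean norm). -/
def cross3 (a b : E3) : E3 :=
  (WithLp.equiv 2 (Fin 3 → ℝ)).symm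
    ![a 1 * b 2 - a 2 * b 1, a 2 * b 0 - a 0 * b 2, a 0 * b 1 - a 1 * b 0]

lemma cross3_norm_sq (a b : E3) :
    ‖cross3 a b‖ ^ 2 = ‖a‖ ^ 2 * ‖b‖ ^ 2 - (inner ℝ a b : ℝ) ^ 2 := by
  have h1 : ‖cross3 a b‖ ^ 2 = (inner ℝ (cross3 a b) (cross3 a b) : ℝ) :=
    (real_inner_self_eq_norm_sq _).symm
  have h2 : ‖a‖ ^ 2 = (inner ℝ a a : ℝ) := (real_inner_self_eq_norm_sq _).symm
  have h3 : ‖b‖ ^ 2 = (inner ℝ b b : ℝ) := (real_inner_self_eq_norm_sq _).symm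
  rw [h1, h2, h3]
  simp only [cross3, PiLp.inner_apply, RCLike.inner_apply, conj_trivial,
    Fin.sum_univ_three, WithLp.equiv_symm_apply, PiLp.toLp_apply]
  simp [Matrix.cons_val_zero, Matrix.cons_val_one]
  ring

lemma elementary_ineq (e z x : ℝ) (he : 0 < e) (hz : 0 < z) (hx : 0 ≤ x)
    (h3 : x ≤ e + z) (h4 : e - z ≤ x) (h5 : z - e ≤ x) :
    ((e+z)^2 - x^2) * (x^2 - (e-z)^2) ≤ 16 * (e * z * (x * (e + z - x))) := by
  have hA : 0 ≤ e + z - x := by linarith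
  have hB : 0 ≤ x + e - z := by linarith
  have hC : 0 ≤ x - e + z := by linarith
  have key : (e + z + x) * ((x + e - z) * (x - e + z)) ≤ 16 * (e * z * x) := by
    rcases le_total z e with h | h
    · calc (e + z + x) * ((x + e - z) * (x - e + z)) ≤ (4*e) * ((2*x) * (2*z)) := by
            apply mul_le_mul (by linarith) ?_ (mul_nonneg hB hC) (by linarith)
            apply mul_le_mul (by linarith) (by linarith) hC (by linarith)
      _ = 16 * (e * z * x) := by ring
    · calc (e + z + x) * ((x + e - z) * (x - e + z)) ≤ (4*z) * ((2*e) * (2*x)) := by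
            apply mul_le_mul (by linarith) ?_ (mul_nonneg hB hC) (by linarith)
            apply mul_le_mul (by linarith) (by linarith) hC (by linarith)
      _ = 16 * (e * z * x) := by ring
  nlinarith [mul_le_mul_of_nonneg_right key hA]

/-- Elliptic bound for the cross-product null form symbol: with `ξ = η + ζ`,
`|η × ζ| / (|η||ζ|) ≲ |ξ|^{1/2} (|η|+|ζ|-|ξ|)^{1/2} / (|η|^{1/2} |ζ|^{1/2})`
with an absolute constant. -/
theorem crossproduct_nullform_elliptic_bound :
    ∃ C : ℝ, 0 < C ∧ ∀ η ζ : E3, η ≠ 0 → ζ ≠ 0 →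
      ‖cross3 η ζ‖ / (‖η‖ * ‖ζ‖) ≤
        C * (Real.sqrt ‖η + ζ‖ * Real.sqrt (‖η‖ + ‖ζ‖ - ‖η + ζ‖)) /
          (Real.sqrt ‖η‖ * Real.sqrt ‖ζ‖) := by
  refine ⟨2, by norm_num, fun η ζ hη hζ => ?_⟩
  set e := ‖η‖ with he_def
  set z := ‖ζ‖ with hz_def
  set x := ‖η + ζ‖ with hx_def
  have he : 0 < e := norm_pos_iff.2 hη
  have hz : 0 < z := norm_pos_iff.2 hζ
  have hx : 0 ≤ x := norm_nonneg _
  have h3 : x ≤ e + z := norm_add_le _ _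
  have h4 : e - z ≤ x := by
    have := norm_sub_norm_le η (-ζ)
    simpa [sub_neg_eq_add] using this
  have h5 : z - e ≤ x := by
    have := norm_sub_norm_le ζ (-η)
    simpa [sub_neg_eq_add, add_comm] using this
  -- squared inequality
  have hip : x ^ 2 = e ^ 2 + 2 * (inner ℝ η ζ : ℝ) + z ^ 2 := norm_add_sq_real η ζ
  have hsq : ‖cross3 η ζ‖ ^ 2 ≤ 4 * (e * z * (x * (e + z - x))) := by
    rw [cross3_norm_sq]
    have key := elementary_ineq e z x he hz hx h3 h4 h5
    nlinarith [key, hip]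
  have hw : 0 ≤ e + z - x := by linarith
  have hprod : (0:ℝ) ≤ e * z * (x * (e + z - x)) :=
    mul_nonneg (mul_nonneg he.le hz.le) (mul_nonneg hx hw)
  have hnorm : ‖cross3 η ζ‖ ≤ 2 * (Real.sqrt x * Real.sqrt (e + z - x) *
      (Real.sqrt e * Real.sqrt z)) := by
    have h1 : ‖cross3 η ζ‖ ≤ Real.sqrt (4 * (e * z * (x * (e + z - x)))) := by
      rw [← Real.sqrt_sq (norm_nonneg (cross3 η ζ))]
      exact Real.sqrt_le_sqrt hsq
    calc ‖cross3 η ζ‖ ≤ Real.sqrt (4 * (e * z * (x * (e + z - x)))) := h1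
      _ = 2 * (Real.sqrt x * Real.sqrt (e + z - x) * (Real.sqrt e * Real.sqrt z)) := by
          rw [show (4 : ℝ) * (e * z * (x * (e + z - x))) =
            (2:ℝ)^2 * (x * ((e + z - x) * (e * z))) by ring,
            Real.sqrt_mul (by positivity), Real.sqrt_sq (by norm_num : (0:ℝ) ≤ 2),
            Real.sqrt_mul hx, Real.sqrt_mul hw, Real.sqrt_mul he.le]
          ring
  -- divide through
  have hse : Real.sqrt e > 0 := Real.sqrt_pos.2 he
  have hsz : Real.sqrt z > 0 := Real.sqrt_pos.2 hz
  rw [div_le_div_iff₀ (by positivity) (by positivity)]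
  have heq : e * z = (Real.sqrt e * Real.sqrt z) * (Real.sqrt e * Real.sqrt z) := by
    rw [show (Real.sqrt e * Real.sqrt z) * (Real.sqrt e * Real.sqrt z)
      = (Real.sqrt e * Real.sqrt e) * (Real.sqrt z * Real.sqrt z) by ring,
      Real.mul_self_sqrt he.le, Real.mul_self_sqrt hz.le]
  calc ‖cross3 η ζ‖ * (Real.sqrt e * Real.sqrt z)
      ≤ (2 * (Real.sqrt x * Real.sqrt (e + z - x) * (Real.sqrt e * Real.sqrt z)))
        * (Real.sqrt e * Real.sqrt z) :=
        mul_le_mul_of_nonneg_right hnorm (by positivity)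
    _ = 2 * (Real.sqrt x * Real.sqrt (e + z - x)) * (e * z) := by rw [heq]; ring
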